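/- Let G be an n-vertex (γ, s)-expander (for every U ⊆ V(G) and F ⊆ E(G) with 1 ≤ |U| ≤ (2/3)n and |F| ≤ s|U|, we have |N_{G−F}(U)| ≥ γ|U|), let 0 < γ < 1, and s ≥ μ ≥ 1. Then for every U ⊆ V(G) with |U| ≤ (2/3)n, there exists U′ ⊆ U with |N_G(U′)| ≥ μ|U′| and |U′| ≥ γ|U|/(12μ). -/

import Mathlib

noncomputable section

/-- The external neighbourhood of `U` in `H`: vertices outside `U` with a neighbour in `U`. -/
def extNbhd {W : Type*} (H : SimpleGraph W) (U : Set W) : Set W :=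
  {v | v ∉ U ∧ ∃ u ∈ U, H.Adj u v}

set_option maxHeartbeats 1000000 in
/-- If `G` is an `n`-vertex `(γ, s)`-expander with `0 < γ < 1` and
`s ≥ μ ≥ 1`, then every `U ⊆ V(G)` with `|U| ≤ (2/3)n` contains a subset `U'` with
`|N_G(U')| ≥ μ|U'|` and `|U'| ≥ γ|U|/(12μ)`. -/
theorem statement10 {V : Type*} [Fintype V] (G : SimpleGraph V) (γ s μ : ℝ)
    (hγ0 : 0 < γ) (hγ1 : γ < 1) (hμ : 1 ≤ μ) (hs : μ ≤ s)
    (hexp : ∀ (U : Set V) (F : Set (Sym2 V)), F ⊆ G.edgeSet →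
      1 ≤ U.ncard → (U.ncard : ℝ) ≤ 2 / 3 * (Fintype.card V : ℝ) →
      (F.ncard : ℝ) ≤ s * U.ncard →
      γ * U.ncard ≤ ((extNbhd (G.deleteEdges F) U).ncard : ℝ)) :
    ∀ U : Set V, (U.ncard : ℝ) ≤ 2 / 3 * (Fintype.card V : ℝ) →
      ∃ U' ⊆ U, μ * U'.ncard ≤ ((extNbhd G U').ncard : ℝ) ∧
        γ * U.ncard / (12 * μ) ≤ (U'.ncard : ℝ) := by
  classical
  intro U hU
  have hμ0 : (0:ℝ) < μ := lt_of_lt_of_le one_pos hμ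
  by_cases hUne : U.Nonempty
  swap
  · refine ⟨∅, Set.empty_subset U, ?_, ?_⟩
    · simp [extNbhd]
    · rw [Set.not_nonempty_iff_eq_empty] at hUne
      simp [hUne]
  have hm1 : 1 ≤ U.ncard := (Set.ncard_pos U.toFinite).2 hUne
  have hm1' : (1:ℝ) ≤ (U.ncard : ℝ) := by exact_mod_cast hm1
  -- every vertex of U has at least μ external neighbours
  have hvert : ∀ v ∈ U, μ ≤ ((extNbhd G {v}).ncard : ℝ) := by
    intro v hv
    by_contra hlt
    push_neg at hlt
    have hNv : extNbhd G {v} = G.neighborSet v := by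
      ext w
      simp only [extNbhd, Set.mem_setOf_eq, Set.mem_singleton_iff,
        SimpleGraph.mem_neighborSet]
      constructor
      · rintro ⟨-, u, rfl, h⟩; exact h
      · intro h; exact ⟨fun hw => G.irrefl (hw ▸ h), v, rfl, h⟩
    set Fv : Set (Sym2 V) := (fun w => s(v, w)) '' G.neighborSet v with hFv
    have hFvsub : Fv ⊆ G.edgeSet := by
      rintro e ⟨w, hw, rfl⟩
      exact hw
    have hFvcard : (Fv.ncard : ℝ) ≤ s * (({v} : Set V).ncard : ℝ) := by
      have h1 : Fv.ncard ≤ (G.neighborSet v).ncard :=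
        Set.ncard_image_le (G.neighborSet v).toFinite
      have h2 : ((G.neighborSet v).ncard : ℝ) < μ := by rw [← hNv]; exact hlt
      have h3 : (Fv.ncard : ℝ) ≤ ((G.neighborSet v).ncard : ℝ) := by exact_mod_cast h1
      rw [Set.ncard_singleton]
      push_cast
      nlinarith
    have hcard1 : ({v} : Set V).ncard = 1 := Set.ncard_singleton v
    have hle : (({v} : Set V).ncard : ℝ) ≤ 2 / 3 * (Fintype.card V : ℝ) := by
      rw [hcard1]; push_cast; linarith
    have hx := hexp {v} Fv hFvsub (by rw [hcard1]) hle hFvcard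
    have hempty : extNbhd (G.deleteEdges Fv) {v} = ∅ := by
      ext w
      simp only [extNbhd, Set.mem_setOf_eq, Set.mem_singleton_iff, Set.mem_empty_iff_false,
        iff_false, not_and]
      rintro hwv ⟨u, rfl, hadj⟩
      rw [SimpleGraph.deleteEdges_adj] at hadj
      exact hadj.2 ⟨w, hadj.1, rfl⟩
    rw [hempty, hcard1] at hx
    simp only [Set.ncard_empty, Nat.cast_zero, Nat.cast_one, mul_one] at hx
    linarith
  by_cases hA : γ * U.ncard ≤ 12 * μ
  · -- small case: take a single vertex
    obtain ⟨v, hv⟩ := hUne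
    refine ⟨{v}, by simpa using hv, ?_, ?_⟩
    · rw [Set.ncard_singleton]; push_cast; rw [mul_one]; exact hvert v hv
    · rw [Set.ncard_singleton]
      push_cast
      rw [div_le_one (by positivity)]
      linarith
  push_neg at hA
  -- big case
  by_contra hno
  push_neg at hno
  have hm12 : (12:ℝ) < (U.ncard : ℝ) := by nlinarith
  set t : ℝ := γ * (U.ncard : ℝ) / (12 * μ) with htdef
  have ht0 : 0 < t := by positivity
  have ht1 : 1 < t := by
    rw [htdef, lt_div_iff₀ (by positivity)]
    linarith
  set T : ℕ := ⌈t⌉₊ with hTdef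
  have htT : t ≤ (T : ℝ) := Nat.le_ceil t
  have hTt : (T : ℝ) < t + 1 := Nat.ceil_lt_add_one ht0.le
  have htm : t < (U.ncard : ℝ) / 12 := by
    rw [htdef, div_lt_div_iff₀ (by positivity) (by norm_num)]
    nlinarith
  have hTm : T ≤ U.ncard := by
    have h1 : (T : ℝ) ≤ (U.ncard : ℝ) := by nlinarith
    exact_mod_cast h1
  -- maximizer of f W = |N(W)\U| - μ|W| over subsets of U
  obtain ⟨M, hMmem, hMmax⟩ := U.toFinset.powerset.exists_max_image
    (fun W : Finset V => ((extNbhd G (↑W) \ U).ncard : ℝ) - μ * W.card) ⟨∅, by simp⟩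

  have hMU : (↑M : Set V) ⊆ U := by
    have h := Finset.mem_powerset.1 hMmem
    intro x hx
    have := h hx
    simpa using this
  have hMcard : ((↑M : Set V)).ncard = M.card := Set.ncard_coe_finset M
  have hf0 : 0 ≤ ((extNbhd G (↑M : Set V) \ U).ncard : ℝ) - μ * M.card := by
    have h := hMmax ∅ (by simp)
    have he : extNbhd G ((↑(∅ : Finset V)) : Set V) = ∅ := by
      ext w; simp [extNbhd]
    rw [he] at h
    simpa using h
  -- Claim 1: |N(M) \ U| < μ T
  have hgMlt : (((extNbhd G (↑M : Set V) \ U).ncard : ℝ)) < μ * T := by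
    by_contra h
    push_neg at h
    have hMexp : μ * ((↑M : Set V).ncard : ℝ) ≤ ((extNbhd G (↑M : Set V)).ncard : ℝ) := by
      have h1 : ((extNbhd G (↑M : Set V) \ U).ncard : ℝ) ≤
          ((extNbhd G (↑M : Set V)).ncard : ℝ) := by
        exact_mod_cast Set.ncard_le_ncard Set.diff_subset (extNbhd G (↑M : Set V)).toFinite
      rw [hMcard]; linarith
    have hMt := hno (↑M) hMU hMexp
    have hMltT : M.card ≤ T := by
      have h1 : ((↑M : Set V).ncard : ℝ) < (T : ℝ) := lt_of_lt_of_le hMt htT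
      rw [hMcard] at h1
      exact_mod_cast h1.le
    obtain ⟨P, hMP, hPU, hPcard⟩ :=
      Finset.exists_subsuperset_card_eq (Finset.mem_powerset.1 hMmem) hMltT
        (by rwa [← Set.ncard_eq_toFinset_card'])
    have hPUset : (↑P : Set V) ⊆ U := by
      intro x hx; have := hPU hx; simpa using this
    have hPncard : ((↑P : Set V)).ncard = T := by rw [Set.ncard_coe_finset, hPcard]
    have hsub : extNbhd G (↑M : Set V) \ U ⊆ extNbhd G (↑P : Set V) := by
      rintro x ⟨⟨hxM, u, huM, hadj⟩, hxU⟩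
      exact ⟨fun hxP => hxU (hPUset hxP), u, hMP huM, hadj⟩
    have hPexp : μ * (((↑P : Set V)).ncard : ℝ) ≤ ((extNbhd G (↑P : Set V)).ncard : ℝ) := by
      have h1 : ((extNbhd G (↑M : Set V) \ U).ncard : ℝ) ≤
          ((extNbhd G (↑P : Set V)).ncard : ℝ) := by
        exact_mod_cast Set.ncard_le_ncard hsub (extNbhd G (↑P : Set V)).toFinite
      rw [hPncard]; linarith
    have hfin := hno (↑P) hPUset hPexp
    rw [hPncard] at hfin
    linarith
  -- Claim 2: every u in U \ M has at most μ neighbours outside U ∪ N(M)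
  have hcset : ∀ u ∈ U, u ∉ M →
      (((G.neighborSet u \ (U ∪ extNbhd G (↑M : Set V))).ncard : ℝ)) ≤ μ := by
    intro u huU huM
    have hins : insert u M ∈ U.toFinset.powerset := by
      rw [Finset.mem_powerset, Finset.insert_subset_iff]
      exact ⟨Set.mem_toFinset.2 huU, Finset.mem_powerset.1 hMmem⟩
    have hle := hMmax (insert u M) hins
    have hcardins : ((insert u M : Finset V).card : ℝ) = M.card + 1 := by
      rw [Finset.card_insert_of_notMem huM]; push_cast; ring
    rw [hcardins, Finset.coe_insert] at hle
    have hsub : (extNbhd G (↑M : Set V) \ U) ∪ (G.neighborSet u \ (U ∪ extNbhd G (↑M : Set V)))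
        ⊆ extNbhd G (↑(insert u M) : Set V) \ U := by
      rintro x (⟨⟨hxM, w, hwM, hadj⟩, hxU⟩ | ⟨hadj, hx⟩)
      · refine ⟨⟨?_, w, ?_, hadj⟩, hxU⟩
        · intro hx
          rcases (by simpa using hx : x = u ∨ x ∈ M) with rfl | hx'
          · exact hxU huU
          · exact hxM (by simpa using hx')
        · simp [hwM]
      · have hxU : x ∉ U := fun h => hx (Or.inl h)
        refine ⟨⟨?_, u, by simp, hadj⟩, hxU⟩
        intro hxmem
        rcases (by simpa using hxmem : x = u ∨ x ∈ M) with rfl | hx'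
        · exact G.irrefl hadj
        · exact hxU (hMU hx')
    have hdisj : Disjoint (extNbhd G (↑M : Set V) \ U)
        (G.neighborSet u \ (U ∪ extNbhd G (↑M : Set V))) := by
      rw [Set.disjoint_left]
      rintro x ⟨hx1, hx2⟩ ⟨-, hx3⟩
      exact hx3 (Or.inr hx1)
    have hunion := Set.ncard_union_eq hdisj (Set.toFinite _) (Set.toFinite _)
    have hle2 : (((extNbhd G (↑M : Set V) \ U) ∪
        (G.neighborSet u \ (U ∪ extNbhd G (↑M : Set V)))).ncard : ℝ) ≤
        ((extNbhd G (↑(insert u M) : Set V) \ U).ncard : ℝ) := by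
      exact_mod_cast Set.ncard_le_ncard hsub (Set.toFinite _)
    rw [hunion] at hle2
    push_cast at hle2
    linarith
  -- the edge set F
  set F : Set (Sym2 V) :=
    {e | e ∈ G.edgeSet ∧ ∃ a b, a ∈ U ∧ b ∈ extNbhd G U ∧ b ∉ extNbhd G (↑M : Set V) ∧
      e = s(a, b)} with hFdef
  have hFsub : F ⊆ G.edgeSet := fun e he => he.1
  -- bound |F|
  have hFcard : (F.ncard : ℝ) ≤ s * (U.ncard : ℝ) := by
    set Sf : Finset (V × V) := Finset.univ.filter
      (fun p : V × V => p.1 ∈ U ∧ p.1 ∉ M ∧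
        p.2 ∈ G.neighborSet p.1 \ (U ∪ extNbhd G (↑M : Set V))) with hSfdef
    have hFsubset : F ⊆ ↑(Sf.image fun p : V × V => s(p.1, p.2)) := by
      rintro e ⟨hedge, a, b, haU, hbN, hbM, rfl⟩
      have hadj : G.Adj a b := hedge
      have hbU : b ∉ U := hbN.1
      have haM : a ∉ M := by
        intro haM
        exact hbM ⟨fun hb => hbU (hMU hb), a, haM, hadj⟩
      have hmem : (a, b) ∈ Sf := by
        rw [hSfdef]
        simp only [Finset.mem_filter, Finset.mem_univ, true_and]
        exact ⟨haU, haM, hadj, fun h => h.elim hbU hbM⟩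
      simp only [Finset.coe_image, Set.mem_image, Finset.mem_coe]
      exact ⟨(a, b), hmem, rfl⟩
    have h1 : F.ncard ≤ (Sf.image fun p : V × V => s(p.1, p.2)).card := by
      have := Set.ncard_le_ncard hFsubset (Set.toFinite _)
      rwa [Set.ncard_coe_finset] at this
    have h2 : Sf.card ≤ ⌊μ⌋₊ * U.toFinset.card := by
      apply Finset.card_le_mul_card_image_of_maps_to (f := Prod.fst) (t := U.toFinset)
      · intro p hp
        rw [hSfdef] at hp
        simp only [Finset.mem_filter] at hp
        exact Set.mem_toFinset.2 hp.2.1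
      · intro u huU
        have huU' : u ∈ U := Set.mem_toFinset.1 huU
        by_cases huM : u ∈ M
        · have hempty : {p ∈ Sf | p.1 = u} = ∅ := by
            rw [Finset.eq_empty_iff_forall_notMem]
            rintro p hp
            rw [Finset.mem_filter] at hp
            obtain ⟨hp1, hpu⟩ := hp
            rw [hSfdef, Finset.mem_filter] at hp1
            exact hp1.2.2.1 (by rw [hpu]; exact huM)
          simp [hempty]
        · have hinj : ({p ∈ Sf | p.1 = u}).card ≤
              (G.neighborSet u \ (U ∪ extNbhd G (↑M : Set V))).ncard := by
            rw [Set.ncard_eq_toFinset_card']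
            apply Finset.card_le_card_of_injOn (fun p => p.2)
            · rintro p hp
              rw [Finset.mem_coe, Finset.mem_filter] at hp
              obtain ⟨hp1, hpu⟩ := hp
              rw [hSfdef] at hp1
              simp only [Finset.mem_filter, Finset.mem_univ, true_and] at hp1
              rw [← hpu]
              exact Set.mem_toFinset.2 hp1.2.2
            · rintro ⟨a1, b1⟩ h1' ⟨a2, b2⟩ h2' hb
              simp only [Finset.coe_filter, Set.mem_setOf_eq] at h1' h2'
              simp only at hb
              rw [Prod.mk.injEq]
              exact ⟨h1'.2.trans h2'.2.symm, hb⟩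
          have hbound : (G.neighborSet u \ (U ∪ extNbhd G (↑M : Set V))).ncard ≤ ⌊μ⌋₊ :=
            Nat.le_floor (hcset u huU' huM)
          exact le_trans hinj hbound
    have h3 : (Sf.image fun p : V × V => s(p.1, p.2)).card ≤ Sf.card :=
      Finset.card_image_le
    have h4 : (U.toFinset.card : ℝ) = (U.ncard : ℝ) := by
      rw [← Set.ncard_eq_toFinset_card']
    have h5 : ((⌊μ⌋₊ : ℕ) : ℝ) ≤ μ := Nat.floor_le hμ0.le
    have h6 : (F.ncard : ℝ) ≤ (⌊μ⌋₊ : ℝ) * (U.toFinset.card : ℝ) := by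
      have := le_trans h1 (le_trans h3 h2)
      exact_mod_cast this
    rw [h4] at h6
    nlinarith
  -- apply expansion to U with F
  have hx := hexp U F hFsub hm1 hU hFcard
  -- the surviving neighbourhood is inside N(M) \ U
  have hsubgM : extNbhd (G.deleteEdges F) U ⊆ extNbhd G (↑M : Set V) \ U := by
    rintro v ⟨hvU, u, huU, hadj⟩
    rw [SimpleGraph.deleteEdges_adj] at hadj
    obtain ⟨hGadj, hnF⟩ := hadj
    have hvN : v ∈ extNbhd G U := ⟨hvU, u, huU, hGadj⟩
    by_cases hvM : v ∈ extNbhd G (↑M : Set V)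
    · exact ⟨hvM, hvU⟩
    · exact absurd ⟨hGadj, u, v, huU, hvN, hvM, rfl⟩ hnF
  have hfinal : ((extNbhd (G.deleteEdges F) U).ncard : ℝ) ≤
      ((extNbhd G (↑M : Set V) \ U).ncard : ℝ) := by
    exact_mod_cast Set.ncard_le_ncard hsubgM (Set.toFinite _)
  -- contradiction
  have hμT : μ * (T : ℝ) < μ * (t + 1) := by nlinarith
  have ht12 : μ * (t + 1) = γ * (U.ncard : ℝ) / 12 + μ := by
    rw [htdef]; field_simp
  have hcontra : γ * (U.ncard : ℝ) < γ * (U.ncard : ℝ) / 6 := by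
    calc γ * (U.ncard : ℝ) ≤ ((extNbhd (G.deleteEdges F) U).ncard : ℝ) := hx
      _ ≤ ((extNbhd G (↑M : Set V) \ U).ncard : ℝ) := hfinal
      _ < μ * T := hgMlt
      _ < μ * (t + 1) := hμT
      _ = γ * (U.ncard : ℝ) / 12 + μ := ht12
      _ < γ * (U.ncard : ℝ) / 12 + γ * (U.ncard : ℝ) / 12 := by linarith
      _ = γ * (U.ncard : ℝ) / 6 := by ring
  nlinarith
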